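/- Let β ≥ 0 and let σ : (0,1) → (0,∞) be differentiable such that |σ'(r)/σ(r) − 1/r| ≤ β and e^{−β(1−r)} r ≤ σ(r) ≤ e^{β(1−r)} r for every r ∈ (0,1). Then the limit α := lim_{r→0⁺} σ(r)/r exists, satisfies e^{−β} ≤ α ≤ e^{β} (in particular α > 0), and one has the quantitative estimate |σ(r)/r − α| ≤ β e^{β} r for every r ∈ (0,1). -/

import Mathlib

/-- Let `β ≥ 0` and let `σ : (0,1) → (0,∞)` be differentiable such that
`|σ'(r)/σ(r) − 1/r| ≤ β` and `e^{−β(1−r)} r ≤ σ(r) ≤ e^{β(1−r)} r` for every `r ∈ (0,1)`.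
Then the limit `α := lim_{r→0⁺} σ(r)/r` exists, satisfies `e^{−β} ≤ α ≤ e^{β}` (in
particular `α > 0`), and `|σ(r)/r − α| ≤ β e^{β} r` for every `r ∈ (0,1)`. -/
theorem statement4 (β : ℝ) (hβ : 0 ≤ β) (σ σ' : ℝ → ℝ)
    (hpos : ∀ r ∈ Set.Ioo (0 : ℝ) 1, 0 < σ r)
    (hderiv : ∀ r ∈ Set.Ioo (0 : ℝ) 1, HasDerivAt σ (σ' r) r)
    (hlog : ∀ r ∈ Set.Ioo (0 : ℝ) 1, |σ' r / σ r - 1 / r| ≤ β)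
    (hbounds : ∀ r ∈ Set.Ioo (0 : ℝ) 1,
        Real.exp (-β * (1 - r)) * r ≤ σ r ∧ σ r ≤ Real.exp (β * (1 - r)) * r) :
    ∃ α : ℝ,
      Filter.Tendsto (fun r => σ r / r) (nhdsWithin 0 (Set.Ioi 0)) (nhds α) ∧
      Real.exp (-β) ≤ α ∧ α ≤ Real.exp β ∧ 0 < α ∧
      ∀ r ∈ Set.Ioo (0 : ℝ) 1, |σ r / r - α| ≤ β * Real.exp β * r := by
  set L : ℝ := β * Real.exp β with hL
  have hLnn : 0 ≤ L := mul_nonneg hβ (Real.exp_pos β).le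
  set f : ℝ → ℝ := fun r => σ r / r with hf
  set f' : ℝ → ℝ := fun r => (σ' r * r - σ r * 1) / r ^ 2 with hf'
  -- f bounds
  have hfub : ∀ r ∈ Set.Ioo (0 : ℝ) 1, f r ≤ Real.exp (β * (1 - r)) := by
    intro r hr
    have := (hbounds r hr).2
    rw [div_le_iff₀ hr.1]
    simpa using this
  have hflb : ∀ r ∈ Set.Ioo (0 : ℝ) 1, Real.exp (-β * (1 - r)) ≤ f r := by
    intro r hr
    have := (hbounds r hr).1
    rw [le_div_iff₀ hr.1]
    simpa using this
  -- derivative of f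
  have hfd : ∀ r ∈ Set.Ioo (0 : ℝ) 1, HasDerivAt f (f' r) r := by
    intro r hr
    exact (hderiv r hr).div (hasDerivAt_id r) (ne_of_gt hr.1)
  -- bound on derivative
  have hfd_bound : ∀ r ∈ Set.Ioo (0 : ℝ) 1, |f' r| ≤ L := by
    intro r hr
    have hr0 := hr.1
    have hσ := hpos r hr
    have key : f' r = f r * (σ' r / σ r - 1 / r) := by
      simp only [hf', hf]
      field_simp
    rw [key, abs_mul, abs_of_pos (div_pos hσ hr0)]
    have h1 : f r ≤ Real.exp β := by
      refine (hfub r hr).trans (Real.exp_le_exp.2 ?_)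
      nlinarith [hr.1, hr.2]
    calc f r * |σ' r / σ r - 1 / r| ≤ Real.exp β * β := by
          apply mul_le_mul h1 (hlog r hr) (abs_nonneg _)
            (Real.exp_pos β).le
      _ = L := by rw [hL]; ring
  -- Lipschitz estimate on Ioo 0 1
  have hlip : ∀ x ∈ Set.Ioo (0 : ℝ) 1, ∀ y ∈ Set.Ioo (0 : ℝ) 1,
      |f y - f x| ≤ L * |y - x| := by
    intro x hx y hy
    have := Convex.norm_image_sub_le_of_norm_hasDerivWithin_le
      (f := f) (f' := f') (C := L) (s := Set.Ioo (0 : ℝ) 1)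
      (fun z hz => (hfd z hz).hasDerivWithinAt)
      (fun z hz => by simpa [Real.norm_eq_abs] using hfd_bound z hz)
      (convex_Ioo 0 1) hx hy
    simpa [Real.norm_eq_abs] using this
  -- g := f + L * id is monotone on Ioo 0 1
  set g : ℝ → ℝ := fun r => f r + L * r with hg
  have hmono : MonotoneOn g (Set.Ioo (0 : ℝ) 1) := by
    intro x hx y hy hxy
    have h := hlip x hx y hy
    have h2 : f x - f y ≤ L * (y - x) := by
      have : |f y - f x| ≤ L * (y - x) := by
        rwa [abs_of_nonneg (sub_nonneg.2 hxy)] at h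
      have := neg_abs_le (f y - f x)
      linarith [abs_le.1 h]
    simp only [hg]
    linarith
  have hbdd : BddBelow (g '' Set.Ioo (0 : ℝ) 1) := by
    refine ⟨0, ?_⟩
    rintro _ ⟨r, hr, rfl⟩
    have h1 := hflb r hr
    have h2 : (0:ℝ) < Real.exp (-β * (1 - r)) := Real.exp_pos _
    simp only [hg]
    nlinarith [hr.1]
  have hne : (Set.Ioo (0 : ℝ) 1).Nonempty := ⟨1/2, by norm_num⟩
  have hgt : Filter.Tendsto g (nhdsWithin 0 (Set.Ioi 0))
      (nhds (sInf (g '' Set.Ioo (0 : ℝ) 1))) :=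
    MonotoneOn.tendsto_nhdsWithin_Ioo_right hne hmono hbdd
  set α : ℝ := sInf (g '' Set.Ioo (0 : ℝ) 1) with hα
  -- f tends to α
  have hft : Filter.Tendsto f (nhdsWithin 0 (Set.Ioi 0)) (nhds α) := by
    have h2 : Filter.Tendsto (fun r : ℝ => L * r) (nhdsWithin 0 (Set.Ioi 0)) (nhds 0) := by
      have : Filter.Tendsto (fun r : ℝ => L * r) (nhds 0) (nhds (L * 0)) :=
        (continuous_const.mul continuous_id).tendsto 0
      simpa using this.mono_left nhdsWithin_le_nhds
    have := hgt.sub h2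
    simp only [hg] at this
    simpa using this
  refine ⟨α, hft, ?_, ?_, ?_, ?_⟩
  · -- exp (-β) ≤ α
    have h1 : Filter.Tendsto (fun r : ℝ => Real.exp (-β * (1 - r)))
        (nhdsWithin 0 (Set.Ioi 0)) (nhds (Real.exp (-β))) := by
      have : Filter.Tendsto (fun r : ℝ => Real.exp (-β * (1 - r))) (nhds 0)
          (nhds (Real.exp (-β * (1 - 0)))) := by
        exact (Real.continuous_exp.comp (continuous_const.mul (continuous_const.sub continuous_id))).tendsto 0
      simpa using this.mono_left nhdsWithin_le_nhds
    refine le_of_tendsto_of_tendsto h1 hft ?_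
    filter_upwards [Ioo_mem_nhdsGT_of_mem (by norm_num : (0:ℝ) ∈ Set.Ico 0 1)] with r hr
    exact hflb r hr
  · -- α ≤ exp β
    have h1 : Filter.Tendsto (fun r : ℝ => Real.exp (β * (1 - r)))
        (nhdsWithin 0 (Set.Ioi 0)) (nhds (Real.exp β)) := by
      have : Filter.Tendsto (fun r : ℝ => Real.exp (β * (1 - r))) (nhds 0)
          (nhds (Real.exp (β * (1 - 0)))) := by
        exact (Real.continuous_exp.comp (continuous_const.mul (continuous_const.sub continuous_id))).tendsto 0
      simpa using this.mono_left nhdsWithin_le_nhds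
    refine le_of_tendsto_of_tendsto hft h1 ?_
    filter_upwards [Ioo_mem_nhdsGT_of_mem (by norm_num : (0:ℝ) ∈ Set.Ico 0 1)] with r hr
    exact hfub r hr
  · -- 0 < α
    have h1 : Filter.Tendsto (fun r : ℝ => Real.exp (-β * (1 - r)))
        (nhdsWithin 0 (Set.Ioi 0)) (nhds (Real.exp (-β))) := by
      have : Filter.Tendsto (fun r : ℝ => Real.exp (-β * (1 - r))) (nhds 0)
          (nhds (Real.exp (-β * (1 - 0)))) := by
        exact (Real.continuous_exp.comp (continuous_const.mul (continuous_const.sub continuous_id))).tendsto 0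
      simpa using this.mono_left nhdsWithin_le_nhds
    have : Real.exp (-β) ≤ α := by
      refine le_of_tendsto_of_tendsto h1 hft ?_
      filter_upwards [Ioo_mem_nhdsGT_of_mem (by norm_num : (0:ℝ) ∈ Set.Ico 0 1)] with r hr
      exact hflb r hr
    exact lt_of_lt_of_le (Real.exp_pos _) this
  · -- the estimate
    intro r hr
    have hev : ∀ᶠ s in nhdsWithin 0 (Set.Ioi 0), |f r - f s| ≤ L * (r - s) := by
      filter_upwards [Ioo_mem_nhdsGT_of_mem
        (Set.mem_Ico.2 ⟨le_refl 0, hr.1⟩)] with s hs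
      have hs' : s ∈ Set.Ioo (0:ℝ) 1 := ⟨hs.1, hs.2.trans hr.2⟩
      have := hlip s hs' r hr
      rwa [abs_of_nonneg (sub_nonneg.2 hs.2.le)] at this
    have h1 : Filter.Tendsto (fun s => |f r - f s|) (nhdsWithin 0 (Set.Ioi 0))
        (nhds |f r - α|) := ((tendsto_const_nhds.sub hft).abs)
    have h2 : Filter.Tendsto (fun s : ℝ => L * (r - s)) (nhdsWithin 0 (Set.Ioi 0))
        (nhds (L * r)) := by
      have : Filter.Tendsto (fun s : ℝ => L * (r - s)) (nhds 0)
          (nhds (L * (r - 0))) := by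
        exact (continuous_const.mul (continuous_const.sub continuous_id)).tendsto 0
      simpa using this.mono_left nhdsWithin_le_nhds
    have := le_of_tendsto_of_tendsto h1 h2 hev
    simpa [hL] using this
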